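/- For every integer q ≥ 2, the Diestel–Leader graph DL(q, q) is isomorphic as a graph to the Cayley graph of the lamplighter group (⊕_ℤ ℤ/qℤ) ⋊ ℤ with respect to the symmetric generating set S = {(b·δ₀, 1) : b ∈ ℤ/qℤ} ∪ {(b·δ₀, 1)⁻¹ : b ∈ ℤ/qℤ} of 2q elements, where δ₀ ∈ ⊕_ℤ ℤ/qℤ is the point mass at 0 (δ₀(0) = 1 and δ₀(m) = 0 for m ≠ 0). -/

import Mathlib

/-- The base group of the lamplighter group: finitely supported functions `ℤ → ℤ/qℤ`. -/
abbrev LampBase (q : ℕ) := ℤ →₀ ZMod q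

/-- The shift automorphism `(k • f)(m) = f(m - k)` of the base group. -/
noncomputable def lampShift (q : ℕ) (k : ℤ) : LampBase q ≃+ LampBase q :=
  Finsupp.domCongr (Equiv.addRight k)

lemma lampShift_apply (q : ℕ) (k : ℤ) (f : LampBase q) (m : ℤ) :
    lampShift q k f m = f (m - k) := by
  simp [lampShift, Finsupp.domCongr_apply, sub_eq_add_neg]

/-- The shift action of `ℤ` on the base group, as a monoid homomorphism
(written multiplicatively). -/
noncomputable def lampAct (q : ℕ) :
    Multiplicative ℤ →* MulAut (Multiplicative (LampBase q)) where
  toFun k := AddEquiv.toMultiplicative (lampShift q (Multiplicative.toAdd k))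
  map_one' := by
    ext f m
    show lampShift q (Multiplicative.toAdd (1 : Multiplicative ℤ)) (Multiplicative.toAdd f) m
      = Multiplicative.toAdd f m
    rw [lampShift_apply]
    norm_num
  map_mul' a b := by
    ext f m
    show lampShift q (Multiplicative.toAdd (a * b)) (Multiplicative.toAdd f) m
      = lampShift q (Multiplicative.toAdd a) (lampShift q (Multiplicative.toAdd b)
          (Multiplicative.toAdd f)) m
    rw [lampShift_apply, lampShift_apply, lampShift_apply]
    congr 1
    show m - (Multiplicative.toAdd a + Multiplicative.toAdd b) = _
    ring
  /-- The lamplighter group `ℤ_q ≀ ℤ = (⊕_ℤ ℤ/qℤ) ⋊ ℤ`. -/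
noncomputable abbrev Lamp (q : ℕ) :=
  SemidirectProduct (Multiplicative (LampBase q)) (Multiplicative ℤ) (lampAct q)


/-- A vertex of the homogeneous tree `T_q` with a fixed end: a pair `(f, n)` with
`f : ℤ → ℤ/qℤ` finitely supported and `f k = 0` for `k ≥ n`. -/
structure TreeVert (q : ℕ) where
  f : ℤ → ZMod q
  lvl : ℤ
  finsupp : {k : ℤ | f k ≠ 0}.Finite
  eventually_zero : ∀ k, lvl ≤ k → f k = 0

/-- Adjacency in the tree `T_q`. -/
def treeAdj (q : ℕ) (u v : TreeVert q) : Prop :=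
  (v.lvl = u.lvl + 1 ∧ ∀ k < u.lvl, u.f k = v.f k) ∨
  (u.lvl = v.lvl + 1 ∧ ∀ k < v.lvl, v.f k = u.f k)

/-- The homogeneous tree `T_q` with a fixed end, as a simple graph. -/
def treeGraph (q : ℕ) : SimpleGraph (TreeVert q) where
  Adj := treeAdj q
  symm := ⟨fun _ _ h => Or.symm h⟩
  loopless := by
    constructor
    rintro u (⟨h, _⟩ | ⟨h, _⟩) <;> omega

/-- Vertices of the Diestel-Leader graph `DL(q₁,…,q_d)`. -/
def DLVert (d : ℕ) (q : Fin d → ℕ) : Type :=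
  { x : (j : Fin d) → TreeVert (q j) // ∑ j, (x j).lvl = 0 }

/-- Adjacency in the Diestel-Leader graph. -/
def DLAdj (d : ℕ) (q : Fin d → ℕ) (x y : DLVert d q) : Prop :=
  ∃ i j : Fin d, i ≠ j ∧ treeAdj (q i) (x.1 i) (y.1 i) ∧ treeAdj (q j) (x.1 j) (y.1 j) ∧
    ∀ k, k ≠ i → k ≠ j → x.1 k = y.1 k

/-- The Diestel-Leader graph `DL(q₁,…,q_d)`. -/
def DLGraph (d : ℕ) (q : Fin d → ℕ) : SimpleGraph (DLVert d q) where
  Adj := DLAdj d q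
  symm := by
    constructor
    rintro x y ⟨i, j, hij, hi, hj, hk⟩
    exact ⟨i, j, hij, Or.symm hi, Or.symm hj, fun k h1 h2 => (hk k h1 h2).symm⟩
  loopless := by
    constructor
    rintro x ⟨i, j, hij, hi, _, _⟩
    rcases hi with ⟨h, _⟩ | ⟨h, _⟩ <;> omega

/-- The generating set `S = {(b·δ₀, 1) : b ∈ ℤ/qℤ} ∪ {(b·δ₀, 1)⁻¹ : b ∈ ℤ/qℤ}`
of the lamplighter group. -/
noncomputable def lampGen (q : ℕ) : Set (Lamp q) :=
  {g | ∃ b : ZMod q,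
    g = (⟨Multiplicative.ofAdd (Finsupp.single 0 b), Multiplicative.ofAdd 1⟩ : Lamp q) ∨
    g = (⟨Multiplicative.ofAdd (Finsupp.single 0 b), Multiplicative.ofAdd 1⟩ : Lamp q)⁻¹}


open Multiplicative SemidirectProduct Finsupp

variable {q : ℕ}

lemma lampAct_apply (r : Multiplicative ℤ) (a : Multiplicative (LampBase q)) (m : ℤ) :
    Multiplicative.toAdd ((lampAct q r) a) m = Multiplicative.toAdd a (m - Multiplicative.toAdd r) :=
  lampShift_apply q _ _ m

lemma lampGen_t : (inr (ofAdd 1) : Lamp q) ∈ lampGen q := by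
  refine ⟨0, Or.inl ?_⟩
  rw [Finsupp.single_zero]
  rfl

lemma lamp_closure_top : Subgroup.closure (lampGen q) = ⊤ := by
  rw [Subgroup.eq_top_iff']
  intro x
  set C := Subgroup.closure (lampGen q) with hC
  have ht : (inr (ofAdd 1) : Lamp q) ∈ C := Subgroup.subset_closure lampGen_t
  have hinr : ∀ r : Multiplicative ℤ, (inr r : Lamp q) ∈ C := by
    intro r
    have : (inr r : Lamp q) = (inr (ofAdd 1)) ^ (toAdd r) := by
      rw [← map_zpow]
      congr 1
      apply Multiplicative.toAdd.injective
      simp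
    rw [this]
    exact zpow_mem ht _
  have hsingle : ∀ b : ZMod q,
      (inl (ofAdd (Finsupp.single 0 b)) : Lamp q) ∈ C := by
    intro b
    have hs : (⟨ofAdd (Finsupp.single 0 b), ofAdd 1⟩ : Lamp q) ∈ C :=
      Subgroup.subset_closure ⟨b, Or.inl rfl⟩
    have : (inl (ofAdd (Finsupp.single 0 b)) : Lamp q)
        = (⟨ofAdd (Finsupp.single 0 b), ofAdd 1⟩ : Lamp q) * (inr (ofAdd 1))⁻¹ := by
      rw [mk_eq_inl_mul_inr, mul_inv_cancel_right]
    rw [this]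
    exact mul_mem hs (inv_mem ht)
  have hinlsingle : ∀ (a : ℤ) (b : ZMod q),
      (inl (ofAdd (Finsupp.single a b)) : Lamp q) ∈ C := by
    intro a b
    have : (ofAdd (Finsupp.single a b) : Multiplicative (LampBase q))
        = lampAct q (ofAdd a) (ofAdd (Finsupp.single 0 b)) := by
      apply Multiplicative.toAdd.injective
      apply Finsupp.ext
      intro m
      rw [lampAct_apply]
      simp only [toAdd_ofAdd, Finsupp.single_apply]
      split_ifs with h1 h2 h2 <;> first | rfl | omega
    rw [this, SemidirectProduct.inl_aut]
    exact mul_mem (mul_mem (hinr _) (hsingle b)) (hinr _)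
  have hinl : ∀ f : LampBase q, (inl (ofAdd f) : Lamp q) ∈ C := by
    intro f
    induction f using Finsupp.induction with
    | zero =>
      have : (ofAdd (0 : LampBase q)) = (1 : Multiplicative (LampBase q)) := rfl
      rw [this, map_one]; exact one_mem _
    | single_add a b f ha hb ih =>
      have : (ofAdd (Finsupp.single a b + f) : Multiplicative (LampBase q))
          = ofAdd (Finsupp.single a b) * ofAdd f := rfl
      rw [this, map_mul]
      exact mul_mem (hinlsingle a b) ih
  have hx : x = inl x.left * inr x.right := by
    rw [← mk_eq_inl_mul_inr]
  rw [hx]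
  have := hinl (toAdd x.left)
  rw [ofAdd_toAdd] at this
  exact mul_mem this (hinr _)

/-! ### Part 2: the vertex bijection -/

/-- First tree component: `f` truncated below level `n`. -/
noncomputable def vert0 (q : ℕ) (f : LampBase q) (n : ℤ) : TreeVert q where
  f k := if k < n then f k else 0
  lvl := n
  finsupp := by
    apply Set.Finite.subset f.finite_support
    intro k hk
    simp only [Set.mem_setOf_eq] at hk
    split_ifs at hk with h
    · simpa using hk
    · exact absurd rfl hk
  eventually_zero := fun k hk => if_neg (not_lt.mpr hk)

/-- Second tree component: `f` reflected above level `n`. -/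
noncomputable def vert1 (q : ℕ) (f : LampBase q) (n : ℤ) : TreeVert q where
  f k := if k < -n then f (-k - 1) else 0
  lvl := -n
  finsupp := by
    apply Set.Finite.subset (Set.Finite.preimage
      (Set.injOn_of_injective (f := fun k : ℤ => -k - 1) (fun a b h => by dsimp at h; omega))
      f.finite_support)
    intro k hk
    simp only [Set.mem_setOf_eq] at hk
    split_ifs at hk with h
    · simpa using hk
    · exact absurd rfl hk
  eventually_zero := fun k hk => if_neg (not_lt.mpr hk)

@[simp] lemma vert0_f (q : ℕ) (f : LampBase q) (n k : ℤ) :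
    (vert0 q f n).f k = if k < n then f k else 0 := rfl
@[simp] lemma vert0_lvl (q : ℕ) (f : LampBase q) (n : ℤ) : (vert0 q f n).lvl = n := rfl
@[simp] lemma vert1_f (q : ℕ) (f : LampBase q) (n k : ℤ) :
    (vert1 q f n).f k = if k < -n then f (-k - 1) else 0 := rfl
@[simp] lemma vert1_lvl (q : ℕ) (f : LampBase q) (n : ℤ) : (vert1 q f n).lvl = -n := rfl

/-- The vertex map from the lamplighter group to `DL(q,q)`. -/
noncomputable def lampToDL (q : ℕ) (x : Lamp q) : DLVert 2 (fun _ => q) :=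
  ⟨![vert0 q (toAdd x.left) (toAdd x.right), vert1 q (toAdd x.left) (toAdd x.right)], by
    simp [Fin.sum_univ_two]⟩

@[simp] lemma lampToDL_zero (q : ℕ) (x : Lamp q) :
    (lampToDL q x).1 0 = vert0 q (toAdd x.left) (toAdd x.right) := rfl
@[simp] lemma lampToDL_one (q : ℕ) (x : Lamp q) :
    (lampToDL q x).1 1 = vert1 q (toAdd x.left) (toAdd x.right) := rfl

/-- The inverse vertex map. -/
noncomputable def dlToLamp (q : ℕ) (x : DLVert 2 (fun _ => q)) : Lamp q :=
  ⟨ofAdd (Finsupp.ofSupportFinite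
      (fun k => if k < (x.1 0).lvl then (x.1 0).f k else (x.1 1).f (-k - 1))
      (by
        apply Set.Finite.subset ((x.1 0).finsupp.union
          (Set.Finite.preimage
            (Set.injOn_of_injective (f := fun k : ℤ => -k - 1) (fun a b h => by dsimp at h; omega))
            (x.1 1).finsupp))
        intro k hk
        simp only [Function.mem_support] at hk
        split_ifs at hk with h
        · exact Or.inl hk
        · exact Or.inr hk)),
    ofAdd (x.1 0).lvl⟩

lemma TreeVert.ext' {q : ℕ} {u v : TreeVert q} (h1 : u.f = v.f) (h2 : u.lvl = v.lvl) :
    u = v := by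
  cases u; cases v; cases h1; cases h2; rfl

lemma dl_lvl1 {q : ℕ} (x : DLVert 2 (fun _ => q)) : (x.1 1).lvl = -(x.1 0).lvl := by
  have := x.2
  rw [Fin.sum_univ_two] at this
  omega

lemma lamp_left_inv (q : ℕ) (x : Lamp q) : dlToLamp q (lampToDL q x) = x := by
  apply SemidirectProduct.ext
  · apply Multiplicative.toAdd.injective
    apply Finsupp.ext
    intro m
    show (Finsupp.ofSupportFinite _ _) m = toAdd x.left m
    rw [Finsupp.ofSupportFinite_coe]
    simp only [lampToDL_zero, lampToDL_one, vert0_f, vert0_lvl, vert1_f, vert1_lvl]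
    split_ifs with h1 h2 h3 <;> first | rfl | omega | (congr 1; omega)
  · show ofAdd (vert0 q (toAdd x.left) (toAdd x.right)).lvl = x.right
    simp
lemma lamp_right_inv (q : ℕ) (x : DLVert 2 (fun _ => q)) : lampToDL q (dlToLamp q x) = x := by
  have hlvl := dl_lvl1 x
  apply Subtype.ext
  funext i
  have hf : toAdd (dlToLamp q x).left
      = Finsupp.ofSupportFinite
        (fun k => if k < (x.1 0).lvl then (x.1 0).f k else (x.1 1).f (-k - 1)) _ := rfl
  have hr : toAdd (dlToLamp q x).right = (x.1 0).lvl := rfl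
  fin_cases i
  · show vert0 q (toAdd (dlToLamp q x).left) (toAdd (dlToLamp q x).right) = x.1 0
    apply TreeVert.ext'
    · funext k
      rw [vert0_f, hf, hr, Finsupp.ofSupportFinite_coe]
      by_cases h : k < (x.1 0).lvl
      · rw [if_pos h, if_pos h]
      · rw [if_neg h, ((x.1 0).eventually_zero k (by omega)).symm]
    · rw [vert0_lvl, hr]
  · show vert1 q (toAdd (dlToLamp q x).left) (toAdd (dlToLamp q x).right) = x.1 1
    apply TreeVert.ext'
    · funext k
      rw [vert1_f, hf, hr, Finsupp.ofSupportFinite_coe]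
      by_cases h : k < -(x.1 0).lvl
      · rw [if_pos h, if_neg (by omega)]
        congr 1
        omega
      · rw [if_neg h, ((x.1 1).eventually_zero k (by omega)).symm]
    · rw [vert1_lvl, hr, hlvl]

/-- The vertex bijection. -/
noncomputable def lampEquiv (q : ℕ) : Lamp q ≃ DLVert 2 (fun _ => q) :=
  ⟨lampToDL q, dlToLamp q, lamp_left_inv q, lamp_right_inv q⟩

/-! ### Part 3: adjacency characterization -/

/-- The combinatorial description of adjacency. -/
def lampStep (q : ℕ) (x y : Lamp q) : Prop :=
  (toAdd y.right = toAdd x.right + 1 ∧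
    ∀ k ≠ toAdd x.right, toAdd x.left k = toAdd y.left k) ∨
  (toAdd x.right = toAdd y.right + 1 ∧
    ∀ k ≠ toAdd y.right, toAdd y.left k = toAdd x.left k)

lemma mem_lampGen_iff {q : ℕ} (g : Lamp q) : g ∈ lampGen q ↔
    (toAdd g.right = 1 ∧ ∀ k : ℤ, k ≠ 0 → toAdd g.left k = 0) ∨
    (toAdd g.right = -1 ∧ ∀ k : ℤ, k ≠ -1 → toAdd g.left k = 0) := by
  constructor
  · rintro ⟨b, rfl | rfl⟩
    · left
      refine ⟨rfl, fun k hk => ?_⟩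
      show Finsupp.single (0:ℤ) b k = 0
      rw [Finsupp.single_apply, if_neg (by omega)]
    · right
      constructor
      · rfl
      · intro k hk
        rw [SemidirectProduct.inv_left]
        rw [lampAct_apply]
        show -(Finsupp.single (0:ℤ) b) (k - toAdd ((ofAdd (1:ℤ))⁻¹)) = 0
        rw [Finsupp.single_apply]
        rw [if_neg (by show (0:ℤ) ≠ k - (-1); omega), neg_zero]
  · rintro (⟨h1, h2⟩ | ⟨h1, h2⟩)
    · refine ⟨toAdd g.left 0, Or.inl ?_⟩
      apply SemidirectProduct.ext
      · apply Multiplicative.toAdd.injective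
        apply Finsupp.ext
        intro m
        show toAdd g.left m = Finsupp.single (0:ℤ) (toAdd g.left 0) m
        rw [Finsupp.single_apply]
        split_ifs with h
        · rw [h]
        · exact h2 m (by omega)
      · exact Multiplicative.toAdd.injective h1
    · refine ⟨-(toAdd g.left (-1)), Or.inr ?_⟩
      apply SemidirectProduct.ext
      · apply Multiplicative.toAdd.injective
        apply Finsupp.ext
        intro m
        rw [SemidirectProduct.inv_left, lampAct_apply]
        show toAdd g.left m
          = -(Finsupp.single (0:ℤ) (-(toAdd g.left (-1)))) (m - toAdd ((ofAdd (1:ℤ))⁻¹))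
        rw [Finsupp.single_apply]
        split_ifs with h
        · have hm : m = -1 := by
            have h' : (0:ℤ) = m - toAdd ((ofAdd (1:ℤ))⁻¹) := h
            simp only [toAdd_inv, toAdd_ofAdd] at h'
            omega
          rw [hm, neg_neg]
        · rw [neg_zero]
          refine h2 m fun hm => h ?_
          show (0:ℤ) = m - toAdd ((ofAdd (1:ℤ))⁻¹)
          simp [hm]
      · apply Multiplicative.toAdd.injective
        rw [SemidirectProduct.inv_right]
        show toAdd g.right = toAdd ((ofAdd (1:ℤ))⁻¹)
        simpa using h1

lemma invmul_right {q : ℕ} (x y : Lamp q) :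
    toAdd (x⁻¹ * y).right = toAdd y.right - toAdd x.right := by
  rw [SemidirectProduct.mul_right, SemidirectProduct.inv_right]
  show toAdd (x.right⁻¹ * y.right) = _
  rw [toAdd_mul, toAdd_inv]
  ring

lemma invmul_left {q : ℕ} (x y : Lamp q) (k : ℤ) :
    toAdd (x⁻¹ * y).left k
      = toAdd y.left (k + toAdd x.right) - toAdd x.left (k + toAdd x.right) := by
  rw [SemidirectProduct.mul_left, SemidirectProduct.inv_left, SemidirectProduct.inv_right]
  rw [toAdd_mul, Finsupp.add_apply, lampAct_apply, lampAct_apply]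
  rw [toAdd_inv, Finsupp.neg_apply, toAdd_inv]
  have : k - -toAdd x.right = k + toAdd x.right := by ring
  rw [this]
  ring

lemma invmul_mem_iff {q : ℕ} (x y : Lamp q) :
    x⁻¹ * y ∈ lampGen q ↔ lampStep q x y := by
  rw [mem_lampGen_iff]
  constructor
  · rintro (⟨h1, h2⟩ | ⟨h1, h2⟩)
    · rw [invmul_right] at h1
      refine Or.inl ⟨by omega, fun k hk => ?_⟩
      have := h2 (k - toAdd x.right) (by omega)
      rw [invmul_left, sub_add_cancel] at this
      exact (sub_eq_zero.mp this).symm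
    · rw [invmul_right] at h1
      refine Or.inr ⟨by omega, fun k hk => ?_⟩
      have := h2 (k - toAdd x.right) (by omega)
      rw [invmul_left, sub_add_cancel] at this
      exact sub_eq_zero.mp this
  · rintro (⟨h1, h2⟩ | ⟨h1, h2⟩)
    · refine Or.inl ⟨by rw [invmul_right]; omega, fun k hk => ?_⟩
      rw [invmul_left]
      exact sub_eq_zero.mpr (h2 (k + toAdd x.right) (by omega)).symm
    · refine Or.inr ⟨by rw [invmul_right]; omega, fun k hk => ?_⟩
      rw [invmul_left]
      exact sub_eq_zero.mpr (h2 (k + toAdd x.right) (by omega))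

/-! ### Part 4: DL adjacency -/

lemma dladj2_iff {q : ℕ} (x y : DLVert 2 (fun _ => q)) :
    DLAdj 2 (fun _ => q) x y ↔
      treeAdj q (x.1 0) (y.1 0) ∧ treeAdj q (x.1 1) (y.1 1) := by
  constructor
  · rintro ⟨i, j, hij, hi, hj, -⟩
    fin_cases i <;> fin_cases j
    · exact absurd rfl hij
    · exact ⟨hi, hj⟩
    · exact ⟨hj, hi⟩
    · exact absurd rfl hij
  · rintro ⟨h0, h1⟩
    exact ⟨0, 1, by decide, h0, h1, fun k hk0 hk1 => by fin_cases k <;> simp_all⟩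

lemma tree0_adj_iff {q : ℕ} (f g : LampBase q) (n m : ℤ) :
    treeAdj q (vert0 q f n) (vert0 q g m) ↔
      ((m = n + 1 ∧ ∀ k < n, f k = g k) ∨ (n = m + 1 ∧ ∀ k < m, g k = f k)) := by
  unfold treeAdj
  simp only [vert0_lvl, vert0_f]
  constructor
  · rintro (⟨h1, h2⟩ | ⟨h1, h2⟩)
    · refine Or.inl ⟨h1, fun k hk => ?_⟩
      have := h2 k hk
      rwa [if_pos hk, if_pos (by omega)] at this
    · refine Or.inr ⟨h1, fun k hk => ?_⟩
      have := h2 k hk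
      rwa [if_pos hk, if_pos (by omega)] at this
  · rintro (⟨h1, h2⟩ | ⟨h1, h2⟩)
    · refine Or.inl ⟨h1, fun k hk => ?_⟩
      rw [if_pos hk, if_pos (by omega)]
      exact h2 k hk
    · refine Or.inr ⟨h1, fun k hk => ?_⟩
      rw [if_pos hk, if_pos (by omega)]
      exact h2 k hk

lemma tree1_adj_iff {q : ℕ} (f g : LampBase q) (n m : ℤ) :
    treeAdj q (vert1 q f n) (vert1 q g m) ↔
      ((m = n - 1 ∧ ∀ k, n ≤ k → f k = g k) ∨ (n = m - 1 ∧ ∀ k, m ≤ k → g k = f k)) := by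
  unfold treeAdj
  simp only [vert1_lvl, vert1_f]
  constructor
  · rintro (⟨h1, h2⟩ | ⟨h1, h2⟩)
    · refine Or.inl ⟨by omega, fun k hk => ?_⟩
      have := h2 (-k - 1) (by omega)
      rw [if_pos (by omega), if_pos (by omega)] at this
      have e : -(-k - 1) - 1 = k := by ring
      rwa [e] at this
    · refine Or.inr ⟨by omega, fun k hk => ?_⟩
      have := h2 (-k - 1) (by omega)
      rw [if_pos (by omega), if_pos (by omega)] at this
      have e : -(-k - 1) - 1 = k := by ring
      rwa [e] at this
  · rintro (⟨h1, h2⟩ | ⟨h1, h2⟩)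
    · refine Or.inl ⟨by omega, fun k hk => ?_⟩
      rw [if_pos hk, if_pos (by omega)]
      exact h2 (-k - 1) (by omega)
    · refine Or.inr ⟨by omega, fun k hk => ?_⟩
      rw [if_pos hk, if_pos (by omega)]
      exact h2 (-k - 1) (by omega)

lemma dl_adj_iff {q : ℕ} (x y : Lamp q) :
    DLAdj 2 (fun _ => q) (lampToDL q x) (lampToDL q y) ↔ lampStep q x y := by
  rw [dladj2_iff]
  simp only [lampToDL_zero, lampToDL_one]
  rw [tree0_adj_iff, tree1_adj_iff]
  unfold lampStep
  constructor
  · rintro ⟨(⟨h1, h2⟩ | ⟨h1, h2⟩), (⟨h3, h4⟩ | ⟨h3, h4⟩)⟩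
    · omega
    · refine Or.inl ⟨h1, fun k hk => ?_⟩
      rcases lt_or_gt_of_ne hk with h | h
      · exact h2 k h
      · exact (h4 k (by omega)).symm
    · refine Or.inr ⟨h1, fun k hk => ?_⟩
      rcases lt_or_gt_of_ne hk with h | h
      · exact h2 k (by omega)
      · exact (h4 k (by omega)).symm
    · omega
  · rintro (⟨h1, h2⟩ | ⟨h1, h2⟩)
    · exact ⟨Or.inl ⟨h1, fun k hk => h2 k (by omega)⟩,
        Or.inr ⟨by omega, fun k hk => (h2 k (by omega)).symm⟩⟩
    · exact ⟨Or.inr ⟨h1, fun k hk => h2 k (by omega)⟩,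
        Or.inl ⟨by omega, fun k hk => (h2 k (by omega)).symm⟩⟩

/-- `DL(q,q)` is isomorphic to the Cayley graph of the lamplighter group
`(⊕_ℤ ℤ/qℤ) ⋊ ℤ` with respect to the symmetric generating set
`S = {(b·δ₀, 1) : b} ∪ {(b·δ₀, 1)⁻¹ : b}`. -/
theorem DL2_is_cayley_of_lamplighter (q : ℕ) (hq : 2 ≤ q) :
    Subgroup.closure (lampGen q) = ⊤ ∧
    Nonempty ((SimpleGraph.fromRel fun x y : Lamp q => x⁻¹ * y ∈ lampGen q) ≃g
      DLGraph 2 (fun _ => q)) := by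
  refine ⟨lamp_closure_top, ⟨⟨lampEquiv q, ?_⟩⟩⟩
  intro x y
  show DLAdj 2 (fun _ => q) (lampToDL q x) (lampToDL q y) ↔ _
  rw [dl_adj_iff, SimpleGraph.fromRel_adj]
  constructor
  · intro h
    refine ⟨?_, Or.inl ((invmul_mem_iff x y).2 h)⟩
    rintro rfl
    rcases h with ⟨h, -⟩ | ⟨h, -⟩ <;> omega
  · rintro ⟨-, h | h⟩
    · exact (invmul_mem_iff x y).1 h
    · rcases (invmul_mem_iff y x).1 h with ⟨h1, h2⟩ | ⟨h1, h2⟩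
      · exact Or.inr ⟨h1, h2⟩
      · exact Or.inl ⟨h1, h2⟩
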